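/- Let P > 0 satisfy the Riccati equation Aᵀ S⁻¹ A − P + Q + F + β² I = 0, where S = P⁻¹ + B R₁⁻¹ Bᵀ + α² (I − BB⁺) R₂⁻¹ (I − BB⁺)ᵀ, with Q ⪰ 0, R₁, R₂ ≻ 0, β, α scalars. If additionally ε > 0 satisfies (ε⁻¹ I − P)⁻¹ ≻ 0, ε⁻¹ ΔAᵀ ΔA ⪯ F, and β² I + Lᵀ R₂ L + Kᵀ R₁ K − A_cᵀ (P⁻¹ − ε I)⁻¹ A_c ⪰ 0 where K = −R₁⁻¹ Bᵀ S⁻¹ A, L = −α R₂⁻¹ (I − BB⁺) S⁻¹ A, and A_c = A + BK, then V(x) = xᵀ P x satisfies V(x(k+1)) − V(x(k)) ≤ 0 along trajectories of x(k+1) = (A + ΔA + BK) x(k). -/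

import Mathlib

open Matrix

private lemma hermT {n : ℕ} {M : Matrix (Fin n) (Fin n) ℝ} (h : M.IsHermitian) : Mᵀ = M := by
  rw [← conjTranspose_eq_transpose_of_trivial]; exact h

private lemma smulPSD {n : ℕ} {c : ℝ} (hc : 0 ≤ c) {M : Matrix (Fin n) (Fin n) ℝ}
    (hM : M.PosSemidef) : (c • M).PosSemidef := by
  refine .of_dotProduct_mulVec_nonneg ?_ (fun y => ?_)
  · have := hM.1
    unfold Matrix.IsHermitian at this ⊢
    rw [conjTranspose_smul, this]
    simp
  · rw [smul_mulVec, dotProduct_smul, smul_eq_mul]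
    exact mul_nonneg hc (hM.dotProduct_mulVec_nonneg y)

private lemma conjPSD {n p : ℕ} {M : Matrix (Fin n) (Fin n) ℝ} (hM : M.PosSemidef)
    (W : Matrix (Fin n) (Fin p) ℝ) : (Wᵀ * M * W).PosSemidef := by
  have := hM.conjTranspose_mul_mul_same W
  rwa [conjTranspose_eq_transpose_of_trivial] at this

private lemma conjPSD' {n : ℕ} {p : Type*} [Fintype p] {M : Matrix (Fin n) (Fin n) ℝ}
    (hM : M.PosSemidef) (W : Matrix p (Fin n) ℝ) : (W * M * Wᵀ).PosSemidef := by
  have := hM.mul_mul_conjTranspose_same W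
  rwa [conjTranspose_eq_transpose_of_trivial] at this

theorem stmt_8 {n m : ℕ}
    (A ΔA P Q F R₂ : Matrix (Fin n) (Fin n) ℝ)
    (B : Matrix (Fin n) (Fin m) ℝ) (R₁ : Matrix (Fin m) (Fin m) ℝ)
    (Bplus : Matrix (Fin m) (Fin n) ℝ)
    (h1 : B * Bplus * B = B) (h2 : Bplus * B * Bplus = Bplus)
    (h3 : (B * Bplus)ᵀ = B * Bplus) (h4 : (Bplus * B)ᵀ = Bplus * B)
    (β α ε : ℝ) (hε : 0 < ε)
    (hP : P.PosDef) (hQ : Q.PosSemidef) (hR1 : R₁.PosDef) (hR2 : R₂.PosDef)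
    (S : Matrix (Fin n) (Fin n) ℝ)
    (hS : S = P⁻¹ + B * R₁⁻¹ * Bᵀ
      + α ^ 2 • ((1 - B * Bplus) * R₂⁻¹ * (1 - B * Bplus)ᵀ))
    (hRic : Aᵀ * S⁻¹ * A - P + Q + F + β ^ 2 • (1 : Matrix (Fin n) (Fin n) ℝ) = 0)
    (hinv : ((ε⁻¹ • (1 : Matrix (Fin n) (Fin n) ℝ) - P)⁻¹).PosDef)
    (hF : (F - ε⁻¹ • (ΔAᵀ * ΔA)).PosSemidef)
    (K : Matrix (Fin m) (Fin n) ℝ) (hK : K = -(R₁⁻¹ * Bᵀ * S⁻¹ * A))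
    (L : Matrix (Fin n) (Fin n) ℝ)
    (hL : L = -(α • (R₂⁻¹ * (1 - B * Bplus) * S⁻¹ * A)))
    (Ac : Matrix (Fin n) (Fin n) ℝ) (hAc : Ac = A + B * K)
    (hcond : (β ^ 2 • (1 : Matrix (Fin n) (Fin n) ℝ) + Lᵀ * R₂ * L + Kᵀ * R₁ * K
        - Acᵀ * (P⁻¹ - ε • (1 : Matrix (Fin n) (Fin n) ℝ))⁻¹ * Ac).PosSemidef)
    (x : ℕ → Fin n → ℝ)
    (hdyn : ∀ k, x (k + 1) = (A + ΔA + B * K) *ᵥ x k) :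
    ∀ k, x (k + 1) ⬝ᵥ P *ᵥ x (k + 1) - x k ⬝ᵥ P *ᵥ x k ≤ 0 := by
  classical
  -- basic symmetry and invertibility facts
  have hPt : Pᵀ = P := hermT hP.isHermitian
  have hPdet : IsUnit P.det := (Matrix.isUnit_iff_isUnit_det _).1 hP.isUnit
  have hR1det : IsUnit R₁.det := (Matrix.isUnit_iff_isUnit_det _).1 hR1.isUnit
  have hR2det : IsUnit R₂.det := (Matrix.isUnit_iff_isUnit_det _).1 hR2.isUnit
  set G := (1 : Matrix (Fin n) (Fin n) ℝ) - B * Bplus with hGdef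
  have hGt : Gᵀ = G := by rw [hGdef, transpose_sub, transpose_one, h3]
  have hBRB : (B * R₁⁻¹ * Bᵀ).PosSemidef := conjPSD' hR1.inv.posSemidef B
  have hGRG : (G * R₂⁻¹ * Gᵀ).PosSemidef := conjPSD' hR2.inv.posSemidef G
  have hSpd : S.PosDef := by
    rw [hS]
    exact (hP.inv.add_posSemidef hBRB).add_posSemidef (smulPSD (sq_nonneg α) hGRG)
  have hSdet : IsUnit S.det := (Matrix.isUnit_iff_isUnit_det _).1 hSpd.isUnit
  have hSit : S⁻¹ᵀ = S⁻¹ := hermT hSpd.inv.isHermitian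
  have hR1it : R₁⁻¹ᵀ = R₁⁻¹ := hermT hR1.inv.isHermitian
  have hR2it : R₂⁻¹ᵀ = R₂⁻¹ := hermT hR2.inv.isHermitian
  -- cancellation lemmas
  have cS : ∀ T : Matrix (Fin n) (Fin n) ℝ, S⁻¹ * (S * T) = T := fun T => by
    rw [← Matrix.mul_assoc, nonsing_inv_mul _ hSdet, one_mul]
  have cR1 : ∀ T : Matrix (Fin m) (Fin n) ℝ, R₁⁻¹ * (R₁ * T) = T := fun T => by
    rw [← Matrix.mul_assoc, nonsing_inv_mul _ hR1det, Matrix.one_mul]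
  have cR2 : ∀ T : Matrix (Fin n) (Fin n) ℝ, R₂⁻¹ * (R₂ * T) = T := fun T => by
    rw [← Matrix.mul_assoc, nonsing_inv_mul _ hR2det, Matrix.one_mul]
  have cP : ∀ T : Matrix (Fin n) (Fin n) ℝ, P⁻¹ * (P * T) = T := fun T => by
    rw [← Matrix.mul_assoc, nonsing_inv_mul _ hPdet, one_mul]
  -- the matrix X and its inverse J
  set X := ε⁻¹ • (1 : Matrix (Fin n) (Fin n) ℝ) - P with hXdef
  have hXpd : X.PosDef := posDef_inv_iff.mp hinv
  have hXdet : IsUnit X.det := (Matrix.isUnit_iff_isUnit_det _).1 hXpd.isUnit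
  set J := X⁻¹ with hJdef
  have hJt : Jᵀ = J := hermT hXpd.inv.isHermitian
  have cXJ : ∀ T : Matrix (Fin n) (Fin n) ℝ, X * (J * T) = T := fun T => by
    rw [hJdef, ← Matrix.mul_assoc, mul_nonsing_inv _ hXdet, one_mul]
  have cJX : ∀ T : Matrix (Fin n) (Fin n) ℝ, J * (X * T) = T := fun T => by
    rw [hJdef, ← Matrix.mul_assoc, nonsing_inv_mul _ hXdet, one_mul]
  -- Woodbury-type identity
  have hM : (P⁻¹ - ε • (1 : Matrix (Fin n) (Fin n) ℝ))⁻¹ = P + P * (J * P) := by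
    apply inv_eq_right_inv
    have h7 : ε • X = 1 - ε • P := by
      rw [hXdef, smul_sub, smul_smul, mul_inv_cancel₀ hε.ne', one_smul]
    have expand : (P⁻¹ - ε • (1 : Matrix (Fin n) (Fin n) ℝ)) * (P + P * (J * P))
        = 1 - ε • P + (1 - ε • P) * (J * P) := by
      simp only [sub_mul, mul_add, add_mul, smul_mul_assoc, one_mul,
        Matrix.mul_assoc, cP, nonsing_inv_mul _ hPdet]
    rw [expand, ← h7, smul_mul_assoc, cXJ, h7]
    abel
  -- behaviour of S under multiplication
  have hcentral : ∀ T : Matrix (Fin n) (Fin n) ℝ,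
      S * T = P⁻¹ * T + B * (R₁⁻¹ * (Bᵀ * T)) + α ^ 2 • (G * (R₂⁻¹ * (G * T))) := by
    intro T
    rw [hS]
    simp only [add_mul, smul_mul_assoc, Matrix.mul_assoc, hGt]
  -- gain identities
  have hKRK : Kᵀ * (R₁ * K) = Aᵀ * (S⁻¹ * (B * (R₁⁻¹ * (Bᵀ * (S⁻¹ * A))))) := by
    rw [hK]
    simp only [transpose_neg, transpose_mul, transpose_transpose, hSit, hR1it,
      Matrix.neg_mul, Matrix.mul_neg, neg_neg, Matrix.mul_assoc, cR1]
  have hLRL : Lᵀ * (R₂ * L) = α ^ 2 • (Aᵀ * (S⁻¹ * (G * (R₂⁻¹ * (G * (S⁻¹ * A)))))) := by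
    rw [hL]
    simp only [transpose_neg, transpose_smul, transpose_mul, hSit, hR2it, hGt,
      Matrix.neg_mul, Matrix.mul_neg, smul_neg, neg_neg, smul_mul_assoc, mul_smul_comm,
      smul_smul, Matrix.mul_assoc, cR2, pow_two]
  have key1 : Aᵀ * (S⁻¹ * A)
      = Aᵀ * (S⁻¹ * (P⁻¹ * (S⁻¹ * A))) + Kᵀ * (R₁ * K) + Lᵀ * (R₂ * L) := by
    have t1 : Aᵀ * (S⁻¹ * A) = Aᵀ * (S⁻¹ * (S * (S⁻¹ * A))) := by rw [cS]
    rw [t1, hcentral (S⁻¹ * A), hKRK, hLRL]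
    simp only [mul_add, mul_smul_comm]
  have hPsum : Aᵀ * (S⁻¹ * (P⁻¹ * (S⁻¹ * A))) + Kᵀ * (R₁ * K) + Lᵀ * (R₂ * L)
      + Q + F + β ^ 2 • (1 : Matrix (Fin n) (Fin n) ℝ) = P := by
    rw [← key1]
    rw [Matrix.mul_assoc Aᵀ S⁻¹ A] at hRic
    have h2 : Aᵀ * (S⁻¹ * A) + Q + F + β ^ 2 • (1 : Matrix (Fin n) (Fin n) ℝ) - P = 0 := by
      rw [← hRic]; abel
    exact sub_eq_zero.mp h2
  -- the D-term is positive semidefinite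
  have hAt : A + ΔA + B * K = Ac + ΔA := by rw [hAc]; abel
  have hDeq : Acᵀ * ((P + P * (J * P)) * Ac) + ε⁻¹ • (ΔAᵀ * ΔA)
      - (A + ΔA + B * K)ᵀ * (P * (A + ΔA + B * K))
      = (J * (P * Ac) - ΔA)ᵀ * X * (J * (P * Ac) - ΔA) := by
    rw [hAt]
    have hXq : ΔAᵀ * (X * ΔA) = ε⁻¹ • (ΔAᵀ * ΔA) - ΔAᵀ * (P * ΔA) := by
      rw [hXdef]
      simp only [sub_mul, smul_mul_assoc, one_mul, mul_sub, mul_smul_comm]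
    have rhs : (J * (P * Ac) - ΔA)ᵀ * X * (J * (P * Ac) - ΔA)
        = Acᵀ * (P * (J * (P * Ac))) - Acᵀ * (P * ΔA) - ΔAᵀ * (P * Ac) + ΔAᵀ * (X * ΔA) := by
      simp only [transpose_sub, transpose_mul, hJt, hPt, sub_mul, mul_sub,
        Matrix.mul_assoc, cJX, cXJ]
      abel
    rw [rhs, hXq]
    simp only [transpose_add, add_mul, mul_add, Matrix.mul_assoc]
    abel
  have hDpsd : (Acᵀ * ((P + P * (J * P)) * Ac) + ε⁻¹ • (ΔAᵀ * ΔA)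
      - (A + ΔA + B * K)ᵀ * (P * (A + ΔA + B * K))).PosSemidef := by
    rw [hDeq]; exact conjPSD hXpd.posSemidef _
  -- remaining PSD pieces
  have hC3 : (Q + Aᵀ * (S⁻¹ * (P⁻¹ * (S⁻¹ * A)))).PosSemidef := by
    refine hQ.add ?_
    have := conjPSD hP.inv.posSemidef (S⁻¹ * A)
    simp only [transpose_mul, hSit, Matrix.mul_assoc] at this
    exact this
  simp only [hM, Matrix.mul_assoc] at hcond
  -- assemble
  have key : (P - (A + ΔA + B * K)ᵀ * (P * (A + ΔA + B * K))).PosSemidef := by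
    have bigPSD := ((hDpsd.add hcond).add hF).add hC3
    have e0 : (Acᵀ * ((P + P * (J * P)) * Ac) + ε⁻¹ • (ΔAᵀ * ΔA)
          - (A + ΔA + B * K)ᵀ * (P * (A + ΔA + B * K)))
        + (β ^ 2 • (1 : Matrix (Fin n) (Fin n) ℝ) + Lᵀ * (R₂ * L) + Kᵀ * (R₁ * K)
          - Acᵀ * ((P + P * (J * P)) * Ac))
        + (F - ε⁻¹ • (ΔAᵀ * ΔA))
        + (Q + Aᵀ * (S⁻¹ * (P⁻¹ * (S⁻¹ * A))))
        = (Aᵀ * (S⁻¹ * (P⁻¹ * (S⁻¹ * A))) + Kᵀ * (R₁ * K) + Lᵀ * (R₂ * L)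
          + Q + F + β ^ 2 • (1 : Matrix (Fin n) (Fin n) ℝ))
          - (A + ΔA + B * K)ᵀ * (P * (A + ΔA + B * K)) := by
      abel
    rw [hPsum] at e0
    rw [e0] at bigPSD
    exact bigPSD
  intro k
  have h0 := key.dotProduct_mulVec_nonneg (x k)
  have hstar : star (x k) = x k := rfl
  rw [hstar, sub_mulVec, dotProduct_sub] at h0
  have hq : x k ⬝ᵥ ((A + ΔA + B * K)ᵀ * (P * (A + ΔA + B * K))) *ᵥ x k
      = ((A + ΔA + B * K) *ᵥ x k) ⬝ᵥ P *ᵥ ((A + ΔA + B * K) *ᵥ x k) := by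
    rw [← Matrix.mulVec_mulVec, ← Matrix.mulVec_mulVec, Matrix.dotProduct_mulVec,
      Matrix.vecMul_transpose]
  rw [hq] at h0
  rw [hdyn k]
  linarith
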